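/- Let $A$, $B$, $C$ be the vertices of an equilateral triangle inscribed in the unit circle and $\lambda < 0$. Then for every point $M$ on the unit circle distinct from $A$, $B$, $C$, $MA^{\lambda} + MB^{\lambda} + MC^{\lambda} \ge 2 + 2^{\lambda}$, with equality exactly when $M$ bisects one of the arcs between consecutive vertices. -/

import Mathlib

lemma aux_ineq (lam x y : ℝ) (hlam : lam < 0) (hx : 0 < x) (hy : 0 < y)
    (hs : x + y ≤ 2) (hp : x * y = (x + y) ^ 2 - 3) :
    2 + (2:ℝ) ^ lam ≤ x ^ lam + y ^ lam + (x + y) ^ lam ∧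
      (x ^ lam + y ^ lam + (x + y) ^ lam = 2 + (2:ℝ) ^ lam ↔ x + y = 2) := by
  have hxy0 : 0 < x * y := mul_pos hx hy
  have hxy1 : x * y ≤ 1 := by nlinarith
  have hs0 : 0 < x + y := by linarith
  have h1 : (2:ℝ) ^ lam ≤ (x + y) ^ lam := Real.rpow_le_rpow_of_nonpos hs0 hs hlam.le
  have h2 : (2:ℝ) ≤ x ^ lam + y ^ lam := by
    have hxl : 0 < x ^ lam := Real.rpow_pos_of_pos hx lam
    have hyl : 0 < y ^ lam := Real.rpow_pos_of_pos hy lam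
    have hmul : x ^ lam * y ^ lam = (x * y) ^ lam := (Real.mul_rpow hx.le hy.le).symm
    have hge1 : (1:ℝ) ≤ (x * y) ^ lam := by
      have := Real.rpow_le_rpow_of_nonpos hxy0 hxy1 hlam.le
      simpa using this
    have h3 : Real.sqrt (x ^ lam) * Real.sqrt (y ^ lam) = Real.sqrt ((x * y) ^ lam) := by
      rw [← Real.sqrt_mul hxl.le, hmul]
    have h4 : (1:ℝ) ≤ Real.sqrt ((x * y) ^ lam) := Real.one_le_sqrt.mpr hge1
    nlinarith [sq_nonneg (Real.sqrt (x ^ lam) - Real.sqrt (y ^ lam)),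
      Real.sq_sqrt hxl.le, Real.sq_sqrt hyl.le]
  refine ⟨by linarith, ?_, ?_⟩
  · intro heq
    by_contra hne
    have hlt : x + y < 2 := lt_of_le_of_ne hs hne
    have : (2:ℝ) ^ lam < (x + y) ^ lam := Real.rpow_lt_rpow_of_neg hs0 hlt hlam
    linarith
  · intro h2eq
    have hx1 : x = 1 := by nlinarith
    have hy1 : y = 1 := by nlinarith
    rw [hx1, hy1]
    norm_num [Real.one_rpow]

lemma key (lam : ℝ) (hlam : lam < 0) (A B C M : EuclideanSpace ℝ (Fin 2))
    (hA : ‖A‖ = 1) (hB : ‖B‖ = 1) (hC : ‖C‖ = 1) (hM : ‖M‖ = 1)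
    (hsum : (inner ℝ M A) + (inner ℝ M B) + (inner ℝ M C) = 0)
    (hprod : (inner ℝ M B) * (inner ℝ M C) = (inner ℝ M A) ^ 2 - 3/4)
    (ha : (inner ℝ M A) ≤ -1/2)
    (hMB : M ≠ B) (hMC : M ≠ C) :
    2 + (2:ℝ) ^ lam ≤ dist M A ^ lam + dist M B ^ lam + dist M C ^ lam ∧
      (dist M A ^ lam + dist M B ^ lam + dist M C ^ lam = 2 + (2:ℝ) ^ lam ↔ M = -A) := by
  set a := (inner ℝ M A) with hadef
  set b := (inner ℝ M B) with hbdef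
  set c := (inner ℝ M C) with hcdef
  have ha1 : -1 ≤ a := by
    have h := abs_real_inner_le_norm M A
    rw [hM, hA, one_mul] at h
    exact (abs_le.mp h).1
  set x := dist M B with hxdef
  set y := dist M C with hydef
  set z := dist M A with hzdef
  have hx2 : x ^ 2 = 2 - 2 * b := by
    simp only [hxdef, hbdef]
    rw [dist_eq_norm, norm_sub_sq_real, hM, hB]; ring
  have hy2 : y ^ 2 = 2 - 2 * c := by
    simp only [hydef, hcdef]
    rw [dist_eq_norm, norm_sub_sq_real, hM, hC]; ring
  have hz2 : z ^ 2 = 2 - 2 * a := by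
    simp only [hzdef, hadef]
    rw [dist_eq_norm, norm_sub_sq_real, hM, hA]; ring
  have hxpos : 0 < x := dist_pos.mpr hMB
  have hypos : 0 < y := dist_pos.mpr hMC
  have hz0 : 0 ≤ z := dist_nonneg
  have hsq : x ^ 2 * y ^ 2 = (2 * a + 1) ^ 2 := by
    rw [hx2, hy2]; linear_combination (-4 : ℝ) * hsum + 4 * hprod
  have hxy : x * y = -(2 * a + 1) := by
    have hf : (x * y - -(2 * a + 1)) * (x * y + -(2 * a + 1)) = 0 := by
      linear_combination hsq
    rcases mul_eq_zero.mp hf with h | h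
    · linarith
    · exfalso; nlinarith [mul_pos hxpos hypos]
  have hsum2 : (x + y) ^ 2 = 2 - 2 * a := by
    linear_combination hx2 + hy2 + 2 * hxy - 2 * hsum
  have hzxy : x + y = z := by
    have hf : (x + y - z) * (x + y + z) = 0 := by
      linear_combination hsum2 - hz2
    rcases mul_eq_zero.mp hf with h | h
    · linarith
    · nlinarith
  have hs2 : x + y ≤ 2 := by nlinarith
  have hpp : x * y = (x + y) ^ 2 - 3 := by
    rw [hsum2]; linarith
  obtain ⟨H1, H2⟩ := aux_ineq lam x y hlam hxpos hypos hs2 hpp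
  rw [hzxy] at H1 H2
  have hiff : z = 2 ↔ M = -A := by
    constructor
    · intro hzz
      have haa : a = -1 := by
        have : z ^ 2 = 4 := by rw [hzz]; norm_num
        rw [hz2] at this; linarith
      have hn : ‖M + A‖ ^ 2 = 0 := by
        rw [norm_add_sq_real, hM, hA, ← hadef, haa]; ring
      have : M + A = 0 := by
        have := pow_eq_zero_iff (n := 2) (by norm_num) |>.mp hn
        exact norm_eq_zero.mp this
      exact eq_neg_of_add_eq_zero_left this
    · intro hMA
      simp only [hzdef, hMA]
      rw [dist_eq_norm]
      have : -A - A = (-2 : ℝ) • A := by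
        rw [neg_smul]
        rw [two_smul]
        abel
      rw [this, norm_smul, hA]
      norm_num
  constructor
  · linarith
  · rw [show z ^ lam + x ^ lam + y ^ lam = x ^ lam + y ^ lam + z ^ lam from by ring]
    exact H2.trans hiff

lemma pair_identity (U V M : EuclideanSpace ℝ (Fin 2))
    (hU : ‖U‖ = 1) (hV : ‖V‖ = 1) (hM : ‖M‖ = 1)
    (hUV : (inner ℝ U V) = -1/2) :
    (inner ℝ M U)^2 + (inner ℝ M U) * (inner ℝ M V) + (inner ℝ M V)^2 = 3/4 := by
  have hexp : ∀ x y : EuclideanSpace ℝ (Fin 2), (inner ℝ x y) = x 0 * y 0 + x 1 * y 1 := by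
    intro x y; simp [PiLp.inner_apply, RCLike.inner_apply, Fin.sum_univ_two]; ring
  have hself : ∀ x : EuclideanSpace ℝ (Fin 2), ‖x‖ = 1 → x 0 * x 0 + x 1 * x 1 = 1 := by
    intro x hx
    have h := real_inner_self_eq_norm_sq x
    rw [hexp, hx] at h; linarith
  have e1 := hself M hM
  have e2 := hself U hU
  have e3 := hself V hV
  have e4 : U 0 * V 0 + U 1 * V 1 = -1/2 := by rw [← hexp]; exact hUV
  rw [hexp, hexp]
  set m0 := M 0; set m1 := M 1; set u0 := U 0; set u1 := U 1; set v0 := V 0; set v1 := V 1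
  set b := m0 * u0 + m1 * u1 with hb
  set c := m0 * v0 + m1 * v1 with hc
  set q := m0 * u1 - m1 * u0 with hq
  set s := m0 * v1 - m1 * v0 with hs
  have f1 : q * s = -1/2 - b * c := by
    rw [hq, hs, hb, hc]; linear_combination (u0 * v0 + u1 * v1) * e1 + e4
  have f2 : q ^ 2 = 1 - b ^ 2 := by
    rw [hq, hb]; linear_combination (u0 ^ 2 + u1 ^ 2) * e1 + e2
  have f3 : s ^ 2 = 1 - c ^ 2 := by
    rw [hs, hc]; linear_combination (v0 ^ 2 + v1 ^ 2) * e1 + e3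
  linear_combination s ^ 2 * f2 + (1 - b ^ 2) * f3 - (q * s - 1/2 - b * c) * f1

lemma pick_lemma (a b c : ℝ) (hsum : a + b + c = 0) (hprod : a * b = c ^ 2 - 3/4)
    (hc1 : c < 1) (ha : -1/2 < a) (hb : -1/2 < b) (hc : -1/2 < c) : False := by
  nlinarith [mul_pos (show (0:ℝ) < a + 1/2 by linarith) (show (0:ℝ) < b + 1/2 by linarith),
    mul_pos (show (0:ℝ) < 1 - c by linarith) (show (0:ℝ) < c + 1/2 by linarith)]

theorem stmt_9 (A B C : EuclideanSpace ℝ (Fin 2))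
    (hA : A ∈ Metric.sphere (0 : EuclideanSpace ℝ (Fin 2)) 1)
    (hB : B ∈ Metric.sphere (0 : EuclideanSpace ℝ (Fin 2)) 1)
    (hC : C ∈ Metric.sphere (0 : EuclideanSpace ℝ (Fin 2)) 1)
    (hAB : dist A B = Real.sqrt 3) (hBC : dist B C = Real.sqrt 3)
    (hCA : dist C A = Real.sqrt 3)
    (lam : ℝ) (hlam : lam < 0) :
    ∀ M ∈ Metric.sphere (0 : EuclideanSpace ℝ (Fin 2)) 1,
      M ≠ A → M ≠ B → M ≠ C →
      (2 + (2 : ℝ) ^ lam ≤ dist M A ^ lam + dist M B ^ lam + dist M C ^ lam ∧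
      (dist M A ^ lam + dist M B ^ lam + dist M C ^ lam = 2 + (2 : ℝ) ^ lam ↔
        M = -A ∨ M = -B ∨ M = -C)) := by
  intro M hMs hMA hMB hMC
  rw [mem_sphere_zero_iff_norm] at hA hB hC hMs
  -- pairwise inner products are -1/2
  have hinner : ∀ U V : EuclideanSpace ℝ (Fin 2), ‖U‖ = 1 → ‖V‖ = 1 →
      dist U V = Real.sqrt 3 → (inner ℝ U V) = -1/2 := by
    intro U V hU hV hUV
    have h3 : dist U V ^ 2 = 3 := by
      rw [hUV, Real.sq_sqrt]; norm_num
    rw [dist_eq_norm, norm_sub_sq_real, hU, hV] at h3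
    linarith
  have hab : (inner ℝ A B) = -1/2 := hinner A B hA hB hAB
  have hbc : (inner ℝ B C) = -1/2 := hinner B C hB hC hBC
  have hca : (inner ℝ C A) = -1/2 := hinner C A hC hA hCA
  have hac : (inner ℝ A C) = -1/2 := by rw [real_inner_comm]; exact hca
  -- A + B + C = 0
  have hABC : A + B + C = 0 := by
    have hn : ‖A + B + C‖ ^ 2 = 0 := by
      rw [norm_add_sq_real, norm_add_sq_real, inner_add_left, hA, hB, hC, hab, hac, hbc]
      ring
    have := pow_eq_zero_iff (n := 2) (by norm_num) |>.mp hn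
    exact norm_eq_zero.mp this
  set a := (inner ℝ M A) with hadef
  set b := (inner ℝ M B) with hbdef
  set c := (inner ℝ M C) with hcdef
  have hsum : a + b + c = 0 := by
    rw [hadef, hbdef, hcdef, ← inner_add_right, ← inner_add_right, hABC, inner_zero_right]
  -- pairwise identities
  have pBC : b ^ 2 + b * c + c ^ 2 = 3/4 := pair_identity B C M hB hC hMs hbc
  have pAC : a ^ 2 + a * c + c ^ 2 = 3/4 := pair_identity A C M hA hC hMs hac
  have pAB : a ^ 2 + a * b + b ^ 2 = 3/4 := pair_identity A B M hA hB hMs hab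
  have prodA : b * c = a ^ 2 - 3/4 := by linear_combination (b + c - a) * hsum - pBC
  have prodB : a * c = b ^ 2 - 3/4 := by linear_combination (a + c - b) * hsum - pAC
  have prodC : a * b = c ^ 2 - 3/4 := by linear_combination (a + b - c) * hsum - pAB
  -- strict upper bounds on inner products from M distinct from vertices
  have hlt : ∀ V : EuclideanSpace ℝ (Fin 2), ‖V‖ = 1 → M ≠ V → (inner ℝ M V) < 1 := by
    intro V hV hMV
    have hd : 0 < dist M V := dist_pos.mpr hMV
    have h2 : dist M V ^ 2 = 2 - 2 * (inner ℝ M V) := by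
      rw [dist_eq_norm, norm_sub_sq_real, hMs, hV]; ring
    nlinarith
  have ha1 : a < 1 := hlt A hA hMA
  have hb1 : b < 1 := hlt B hB hMB
  have hc1 : c < 1 := hlt C hC hMC
  -- key applied per distinguished vertex
  have KA : a ≤ -1/2 →
      (2 + (2:ℝ) ^ lam ≤ dist M A ^ lam + dist M B ^ lam + dist M C ^ lam ∧
        (dist M A ^ lam + dist M B ^ lam + dist M C ^ lam = 2 + (2:ℝ) ^ lam ↔ M = -A)) := by
    intro h
    exact key lam hlam A B C M hA hB hC hMs hsum prodA h hMB hMC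
  have KB : b ≤ -1/2 →
      (2 + (2:ℝ) ^ lam ≤ dist M A ^ lam + dist M B ^ lam + dist M C ^ lam ∧
        (dist M A ^ lam + dist M B ^ lam + dist M C ^ lam = 2 + (2:ℝ) ^ lam ↔ M = -B)) := by
    intro h
    have hsum' : b + a + c = 0 := by linarith
    obtain ⟨k1, k2⟩ := key lam hlam B A C M hB hA hC hMs hsum' prodB h hMA hMC
    refine ⟨by linarith, ?_⟩
    rw [show dist M A ^ lam + dist M B ^ lam + dist M C ^ lam
        = dist M B ^ lam + dist M A ^ lam + dist M C ^ lam from by ring]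
    exact k2
  have KC : c ≤ -1/2 →
      (2 + (2:ℝ) ^ lam ≤ dist M A ^ lam + dist M B ^ lam + dist M C ^ lam ∧
        (dist M A ^ lam + dist M B ^ lam + dist M C ^ lam = 2 + (2:ℝ) ^ lam ↔ M = -C)) := by
    intro h
    have hsum' : c + a + b = 0 := by linarith
    have prodC' : a * b = c ^ 2 - 3/4 := prodC
    obtain ⟨k1, k2⟩ := key lam hlam C A B M hC hA hB hMs hsum' prodC' h hMA hMB
    refine ⟨by linarith, ?_⟩
    rw [show dist M A ^ lam + dist M B ^ lam + dist M C ^ lam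
        = dist M C ^ lam + dist M A ^ lam + dist M B ^ lam from by ring]
    exact k2
  -- backward direction of the equality characterization
  have hneg : ∀ V : EuclideanSpace ℝ (Fin 2), ‖V‖ = 1 → M = -V → (inner ℝ M V) = -1 := by
    intro V hV hMV
    rw [hMV, inner_neg_left, real_inner_self_eq_norm_sq, hV]
    norm_num
  have back : (M = -A ∨ M = -B ∨ M = -C) →
      dist M A ^ lam + dist M B ^ lam + dist M C ^ lam = 2 + (2:ℝ) ^ lam := by
    rintro (h | h | h)
    · exact ((KA (by rw [hadef, hneg A hA h]; norm_num)).2).mpr h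
    · exact ((KB (by rw [hbdef, hneg B hB h]; norm_num)).2).mpr h
    · exact ((KC (by rw [hcdef, hneg C hC h]; norm_num)).2).mpr h
  -- pick a distinguished vertex with inner product ≤ -1/2
  by_cases haa : a ≤ -1/2
  · obtain ⟨h1, h2⟩ := KA haa
    exact ⟨h1, ⟨fun he => Or.inl (h2.mp he), back⟩⟩
  · by_cases hbb : b ≤ -1/2
    · obtain ⟨h1, h2⟩ := KB hbb
      exact ⟨h1, ⟨fun he => Or.inr (Or.inl (h2.mp he)), back⟩⟩
    · have hcc : c ≤ -1/2 := by
        by_contra hcc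
        push_neg at haa hbb hcc
        exact pick_lemma a b c hsum prodC hc1 haa hbb hcc
      obtain ⟨h1, h2⟩ := KC hcc
      exact ⟨h1, ⟨fun he => Or.inr (Or.inr (h2.mp he)), back⟩⟩
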